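/- Under the hypotheses of the dual certificate lemma with ‖P_Ω P_T‖ ≤ 1 − ε, for any perturbation H the feasible objective satisfies ‖L₀+H‖_* + λ‖S₀−H‖₁ ≥ ‖L₀‖_* + λ‖S₀‖₁ + ((1−α) − λε)‖P_{T⊥}H‖_* + λ(1/2 − (1−ε)ε)‖P_{Ω⊥}H‖₁. -/

import Mathlib

open Matrix

noncomputable def frobInner {n : ℕ} (A B : Matrix (Fin n) (Fin n) ℝ) : ℝ :=
  Matrix.trace (Aᵀ * B)

noncomputable def matSpectralNorm {n : ℕ} (A : Matrix (Fin n) (Fin n) ℝ) : ℝ :=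
  ‖Matrix.toEuclideanCLM (𝕜 := ℝ) A‖

noncomputable def nuclearNorm {n : ℕ} (A : Matrix (Fin n) (Fin n) ℝ) : ℝ :=
  ∑ i, Real.sqrt ((show (Aᵀ * A).IsHermitian by
    simpa [Matrix.conjTranspose_eq_transpose_of_trivial] using
      Matrix.isHermitian_conjTranspose_mul_self A).eigenvalues i)

noncomputable def l1Norm {n : ℕ} (A : Matrix (Fin n) (Fin n) ℝ) : ℝ :=
  ∑ i, ∑ j, |A i j|

noncomputable def signMatrix {n : ℕ} (A : Matrix (Fin n) (Fin n) ℝ) :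
    Matrix (Fin n) (Fin n) ℝ :=
  Matrix.of fun i j => Real.sign (A i j)

def projSupp {n : ℕ} (Ω : Set (Fin n × Fin n)) [DecidablePred (· ∈ Ω)]
    (M : Matrix (Fin n) (Fin n) ℝ) : Matrix (Fin n) (Fin n) ℝ :=
  Matrix.of fun i j => if (i, j) ∈ Ω then M i j else 0

def projT {n r : ℕ} (U V : Matrix (Fin n) (Fin r) ℝ)
    (M : Matrix (Fin n) (Fin n) ℝ) : Matrix (Fin n) (Fin n) ℝ :=
  U * Uᵀ * M + M * (V * Vᵀ) - U * Uᵀ * M * (V * Vᵀ)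


noncomputable def frobNorm {n : ℕ} (A : Matrix (Fin n) (Fin n) ℝ) : ℝ :=
  Real.sqrt (∑ i, ∑ j, (A i j) ^ 2)

namespace PCPaux

variable {n r : ℕ}

lemma hermTT (A : Matrix (Fin n) (Fin n) ℝ) : (Aᵀ * A).IsHermitian := by
  simpa [Matrix.conjTranspose_eq_transpose_of_trivial] using
    Matrix.isHermitian_conjTranspose_mul_self A

/-! ### Frobenius inner product basics -/

noncomputable def toE (A : Matrix (Fin n) (Fin n) ℝ) : EuclideanSpace ℝ (Fin n × Fin n) :=
  (WithLp.equiv 2 _).symm (fun p => A p.1 p.2)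

lemma toE_add (A B : Matrix (Fin n) (Fin n) ℝ) : toE (A + B) = toE A + toE B := rfl

lemma norm_toE (A : Matrix (Fin n) (Fin n) ℝ) : ‖toE A‖ = frobNorm A := by
  rw [EuclideanSpace.norm_eq, frobNorm]
  congr 1
  rw [Fintype.sum_prod_type]
  simp [toE, sq_abs]

lemma inner_toE (A B : Matrix (Fin n) (Fin n) ℝ) : (inner ℝ (toE A) (toE B) : ℝ) = frobInner A B := by
  rw [PiLp.inner_apply, frobInner]
  simp only [RCLike.inner_apply, conj_trivial, Matrix.trace, Matrix.diag, Matrix.mul_apply,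
    Matrix.transpose_apply, toE]
  rw [Fintype.sum_prod_type]
  rw [Finset.sum_comm]; simp [mul_comm]

lemma frobInner_eq_sum (A B : Matrix (Fin n) (Fin n) ℝ) :
    frobInner A B = ∑ i, ∑ j, A i j * B i j := by
  rw [← inner_toE, PiLp.inner_apply]
  simp only [RCLike.inner_apply, conj_trivial, toE]
  rw [Fintype.sum_prod_type]; simp [mul_comm]

lemma frobNorm_nonneg (A : Matrix (Fin n) (Fin n) ℝ) : 0 ≤ frobNorm A := Real.sqrt_nonneg _

lemma frobInner_le (A B : Matrix (Fin n) (Fin n) ℝ) :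
    frobInner A B ≤ frobNorm A * frobNorm B := by
  rw [← inner_toE, ← norm_toE, ← norm_toE]; exact real_inner_le_norm _ _

lemma frobNorm_add_le (A B : Matrix (Fin n) (Fin n) ℝ) :
    frobNorm (A + B) ≤ frobNorm A + frobNorm B := by
  rw [← norm_toE, ← norm_toE, ← norm_toE, toE_add]
  exact norm_add_le _ _

lemma frobInner_comm (A B : Matrix (Fin n) (Fin n) ℝ) : frobInner A B = frobInner B A := by
  rw [frobInner, frobInner, ← Matrix.trace_transpose, Matrix.transpose_mul,
    Matrix.transpose_transpose]

lemma frobInner_add_right (A B C : Matrix (Fin n) (Fin n) ℝ) :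
    frobInner A (B + C) = frobInner A B + frobInner A C := by
  simp [frobInner, Matrix.mul_add]

lemma frobInner_add_left (A B C : Matrix (Fin n) (Fin n) ℝ) :
    frobInner (A + B) C = frobInner A C + frobInner B C := by
  simp [frobInner, Matrix.add_mul]

lemma frobInner_sub_left (A B C : Matrix (Fin n) (Fin n) ℝ) :
    frobInner (A - B) C = frobInner A C - frobInner B C := by
  simp [frobInner, Matrix.sub_mul]

lemma frobInner_smul_left (c : ℝ) (A B : Matrix (Fin n) (Fin n) ℝ) :
    frobInner (c • A) B = c * frobInner A B := by
  simp [frobInner, Matrix.transpose_smul, Matrix.smul_mul]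

lemma frobInner_zero_left (B : Matrix (Fin n) (Fin n) ℝ) : frobInner 0 B = 0 := by
  simp [frobInner]

lemma frobInner_neg_left (A B : Matrix (Fin n) (Fin n) ℝ) :
    frobInner (-A) B = - frobInner A B := by
  simp [frobInner, Matrix.neg_mul]

lemma neg_frobInner_le (A B : Matrix (Fin n) (Fin n) ℝ) :
    - (frobNorm A * frobNorm B) ≤ frobInner A B := by
  have h := frobInner_le (-A) B
  rw [frobInner_neg_left] at h
  have h2 : frobNorm (-A) = frobNorm A := by
    unfold frobNorm; congr 1; simp
  rw [h2] at h
  linarith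

/-! ### Euclidean vector norm -/

noncomputable def enorm (x : Fin n → ℝ) : ℝ := Real.sqrt (∑ i, x i ^ 2)

lemma enorm_eq (x : Fin n → ℝ) : ‖(WithLp.equiv 2 (Fin n → ℝ)).symm x‖ = enorm x := by
  rw [EuclideanSpace.norm_eq, enorm]; simp [sq_abs]

lemma enorm_nonneg (x : Fin n → ℝ) : 0 ≤ enorm x := Real.sqrt_nonneg _

lemma mulVec_enorm_le (A : Matrix (Fin n) (Fin n) ℝ) (x : Fin n → ℝ) :
    enorm (A *ᵥ x) ≤ matSpectralNorm A * enorm x := by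
  have h := (Matrix.toEuclideanCLM (𝕜 := ℝ) A).le_opNorm ((WithLp.equiv 2 (Fin n → ℝ)).symm x)
  rwa [show (Matrix.toEuclideanCLM (𝕜 := ℝ) A) ((WithLp.equiv 2 (Fin n → ℝ)).symm x) = (WithLp.equiv 2 (Fin n → ℝ)).symm (A *ᵥ x) from rfl, enorm_eq, enorm_eq] at h

lemma spectralNorm_nonneg (A : Matrix (Fin n) (Fin n) ℝ) : 0 ≤ matSpectralNorm A := norm_nonneg _

lemma spectralNorm_le_bound (A : Matrix (Fin n) (Fin n) ℝ) {c : ℝ} (hc : 0 ≤ c)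
    (h : ∀ x, enorm (A *ᵥ x) ≤ c * enorm x) : matSpectralNorm A ≤ c := by
  refine ContinuousLinearMap.opNorm_le_bound _ hc fun y => ?_
  have h2 := h ((WithLp.equiv 2 (Fin n → ℝ)) y)
  have e1 : (Matrix.toEuclideanCLM (𝕜 := ℝ) A) y
      = (WithLp.equiv 2 (Fin n → ℝ)).symm (A *ᵥ ((WithLp.equiv 2 (Fin n → ℝ)) y)) := by
    conv_lhs => rw [← Equiv.symm_apply_apply (WithLp.equiv 2 (Fin n → ℝ)) y]
    rfl
  calc ‖(Matrix.toEuclideanCLM (𝕜 := ℝ) A) y‖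
      = enorm (A *ᵥ ((WithLp.equiv 2 (Fin n → ℝ)) y)) := by rw [e1, enorm_eq]
    _ ≤ c * enorm ((WithLp.equiv 2 (Fin n → ℝ)) y) := h2
    _ = c * ‖y‖ := by rw [← enorm_eq, Equiv.symm_apply_apply]

lemma dot_le_enorm (x y : Fin n → ℝ) : x ⬝ᵥ y ≤ enorm x * enorm y := by
  have h := real_inner_le_norm ((WithLp.equiv 2 (Fin n → ℝ)).symm x)
    ((WithLp.equiv 2 (Fin n → ℝ)).symm y)
  rw [enorm_eq, enorm_eq, PiLp.inner_apply] at h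
  simpa [dotProduct, RCLike.inner_apply, mul_comm] using h

lemma dot_self_eq (x : Fin n → ℝ) : x ⬝ᵥ x = enorm x ^ 2 := by
  rw [enorm, Real.sq_sqrt (by positivity)]
  simp [dotProduct, pow_two]

lemma dot_mulVec_self (A : Matrix (Fin n) (Fin n) ℝ) (x : Fin n → ℝ) :
    (A *ᵥ x) ⬝ᵥ (A *ᵥ x) = x ⬝ᵥ ((Aᵀ * A) *ᵥ x) := by
  rw [← Matrix.mulVec_mulVec, Matrix.dotProduct_mulVec x, Matrix.vecMul_transpose]

lemma spectralNorm_le_one_of_proj (A : Matrix (Fin n) (Fin n) ℝ)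
    (hid : (Aᵀ * A) * (Aᵀ * A) = Aᵀ * A) : matSpectralNorm A ≤ 1 := by
  apply spectralNorm_le_bound A zero_le_one
  intro x
  rw [one_mul]
  set M := Aᵀ * A with hM
  have hMT : Mᵀ = M := by rw [hM, Matrix.transpose_mul, Matrix.transpose_transpose]
  set y := M *ᵥ x with hy
  have h1 : y ⬝ᵥ y = x ⬝ᵥ y := by
    rw [hy, dot_mulVec_self M x, hMT, hid]
  have h2 : enorm y ^ 2 ≤ enorm x * enorm y := by
    rw [← dot_self_eq, h1]; exact dot_le_enorm x y
  have h3 : enorm y ≤ enorm x := by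
    rcases eq_or_lt_of_le (enorm_nonneg y) with h | h
    · rw [← h]; exact enorm_nonneg x
    · nlinarith [h2]
  have h4 : enorm (A *ᵥ x) ^ 2 = x ⬝ᵥ y := by
    rw [← dot_self_eq, dot_mulVec_self]
  calc enorm (A *ᵥ x) = Real.sqrt (enorm (A *ᵥ x) ^ 2) := (Real.sqrt_sq (enorm_nonneg _)).symm
    _ = Real.sqrt (x ⬝ᵥ y) := by rw [h4]
    _ ≤ Real.sqrt (enorm x ^ 2) := by
        apply Real.sqrt_le_sqrt
        rw [← h1, dot_self_eq]
        nlinarith [enorm_nonneg y, enorm_nonneg x, h3]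
    _ = enorm x := Real.sqrt_sq (enorm_nonneg _)

/-! ### eigen data of AᵀA -/

noncomputable def evQ (A : Matrix (Fin n) (Fin n) ℝ) : Matrix (Fin n) (Fin n) ℝ :=
  ((hermTT A).eigenvectorUnitary : Matrix (Fin n) (Fin n) ℝ)

noncomputable def evL (A : Matrix (Fin n) (Fin n) ℝ) : Fin n → ℝ :=
  (hermTT A).eigenvalues

theorem spec_thm (A : Matrix (Fin n) (Fin n) ℝ) :
    Aᵀ * A = evQ A * Matrix.diagonal (evL A) * (evQ A)ᵀ := by
  have h := (hermTT A).spectral_theorem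
  simp only [Matrix.star_eq_conjTranspose, Matrix.conjTranspose_eq_transpose_of_trivial,
    RCLike.ofReal_real_eq_id, Function.comp_id] at h
  exact h

theorem evQ_orth (A : Matrix (Fin n) (Fin n) ℝ) : (evQ A)ᵀ * evQ A = 1 := by
  have h1 := ((hermTT A).eigenvectorUnitary).2
  rw [Unitary.mem_iff] at h1
  have h := h1.1
  simp only [Matrix.star_eq_conjTranspose, Matrix.conjTranspose_eq_transpose_of_trivial] at h
  exact h

theorem evQ_orth' (A : Matrix (Fin n) (Fin n) ℝ) : evQ A * (evQ A)ᵀ = 1 :=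
  mul_eq_one_comm.mp (evQ_orth A)

theorem evL_nonneg (A : Matrix (Fin n) (Fin n) ℝ) (i : Fin n) : 0 ≤ evL A i := by
  have h : (Aᵀ * A).PosSemidef := by
    have h2 := Matrix.posSemidef_conjTranspose_mul_self A
    rwa [Matrix.conjTranspose_eq_transpose_of_trivial] at h2
  exact h.eigenvalues_nonneg i

theorem nuclearNorm_eq (A : Matrix (Fin n) (Fin n) ℝ) :
    nuclearNorm A = ∑ i, Real.sqrt (evL A i) := rfl

theorem nuclearNorm_nonneg (A : Matrix (Fin n) (Fin n) ℝ) : 0 ≤ nuclearNorm A :=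
  Finset.sum_nonneg fun _ _ => Real.sqrt_nonneg _

theorem sandwich_mul (Q : Matrix (Fin n) (Fin n) ℝ) (hQ : Qᵀ * Q = 1) (a b : Fin n → ℝ) :
    (Q * diagonal a * Qᵀ) * (Q * diagonal b * Qᵀ) = Q * diagonal (fun i => a i * b i) * Qᵀ := by
  have hq : ∀ X : Matrix (Fin n) (Fin n) ℝ, Qᵀ * (Q * X) = X := fun X => by
    rw [← Matrix.mul_assoc, hQ, Matrix.one_mul]
  simp only [Matrix.mul_assoc]
  rw [hq, ← Matrix.mul_assoc (diagonal a) (diagonal b) Qᵀ, Matrix.diagonal_mul_diagonal]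

theorem sandwich_transpose (Q : Matrix (Fin n) (Fin n) ℝ) (a : Fin n → ℝ) :
    (Q * diagonal a * Qᵀ)ᵀ = Q * diagonal a * Qᵀ := by
  simp [Matrix.transpose_mul, Matrix.diagonal_transpose, Matrix.mul_assoc]

theorem sandwich_trace (Q : Matrix (Fin n) (Fin n) ℝ) (hQ : Qᵀ * Q = 1) (a : Fin n → ℝ) :
    Matrix.trace (Q * diagonal a * Qᵀ) = ∑ i, a i := by
  rw [Matrix.trace_mul_comm, ← Matrix.mul_assoc, hQ, Matrix.one_mul, Matrix.trace_diagonal]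

/-! ### dual certificate matrix for the nuclear norm -/

noncomputable def dualW (A : Matrix (Fin n) (Fin n) ℝ) : Matrix (Fin n) (Fin n) ℝ :=
  A * (evQ A * diagonal (fun i => if 0 < evL A i then (Real.sqrt (evL A i))⁻¹ else 0) * (evQ A)ᵀ)

theorem dualW_transpose_mul (A : Matrix (Fin n) (Fin n) ℝ) :
    (dualW A)ᵀ * dualW A
      = evQ A * diagonal (fun i => if 0 < evL A i then (1:ℝ) else 0) * (evQ A)ᵀ := by
  have h1 : (dualW A)ᵀ * dualW A
      = (evQ A * diagonal (fun i => if 0 < evL A i then (Real.sqrt (evL A i))⁻¹ else 0) * (evQ A)ᵀ)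
        * ((Aᵀ * A) * (evQ A * diagonal (fun i => if 0 < evL A i then (Real.sqrt (evL A i))⁻¹ else 0) * (evQ A)ᵀ)) := by
    rw [dualW, Matrix.transpose_mul, sandwich_transpose]
    simp only [Matrix.mul_assoc]
  have hfun : (fun i => ((if 0 < evL A i then (Real.sqrt (evL A i))⁻¹ else 0) * evL A i)
        * (if 0 < evL A i then (Real.sqrt (evL A i))⁻¹ else 0))
      = (fun i => if 0 < evL A i then (1:ℝ) else 0) := by
    funext i
    by_cases h : 0 < evL A i
    · simp only [if_pos h]
      have hs : Real.sqrt (evL A i) ≠ 0 := by positivity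
      field_simp
      rw [Real.sq_sqrt h.le]
    · simp [h]
  rw [h1, spec_thm A, ← Matrix.mul_assoc, sandwich_mul _ (evQ_orth A),
    sandwich_mul _ (evQ_orth A), hfun]

theorem dualW_spec_le_one (A : Matrix (Fin n) (Fin n) ℝ) : matSpectralNorm (dualW A) ≤ 1 := by
  apply spectralNorm_le_one_of_proj
  rw [dualW_transpose_mul, sandwich_mul _ (evQ_orth A)]
  have hfun : (fun i => (if 0 < evL A i then (1:ℝ) else 0) * (if 0 < evL A i then (1:ℝ) else 0))
      = (fun i => if 0 < evL A i then (1:ℝ) else 0) := by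
    funext i
    by_cases h : 0 < evL A i <;> simp [h]
  rw [hfun]

theorem dualW_frobInner (A : Matrix (Fin n) (Fin n) ℝ) :
    frobInner (dualW A) A = nuclearNorm A := by
  have h1 : (dualW A)ᵀ * A
      = evQ A * diagonal (fun i =>
          (if 0 < evL A i then (Real.sqrt (evL A i))⁻¹ else 0) * evL A i) * (evQ A)ᵀ := by
    rw [dualW, Matrix.transpose_mul, sandwich_transpose, Matrix.mul_assoc, spec_thm A,
      sandwich_mul _ (evQ_orth A)]
  rw [frobInner, h1, sandwich_trace _ (evQ_orth A), nuclearNorm_eq]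
  apply Finset.sum_congr rfl
  intro i _
  by_cases h : 0 < evL A i
  · have hs : Real.sqrt (evL A i) ≠ 0 := by positivity
    rw [if_pos h, inv_mul_eq_div, eq_comm, eq_div_iff hs, Real.mul_self_sqrt h.le]
  · have h0 : evL A i = 0 := le_antisymm (not_lt.mp h) (evL_nonneg A i)
    simp [h, h0]

theorem dualW_mul_eq_zero (A : Matrix (Fin n) (Fin n) ℝ) (V : Matrix (Fin n) (Fin r) ℝ)
    (h : A * V = 0) : dualW A * V = 0 := by
  have hfun : (fun i => (if 0 < evL A i then (evL A i * Real.sqrt (evL A i))⁻¹ else 0) * evL A i)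
      = (fun i => if 0 < evL A i then (Real.sqrt (evL A i))⁻¹ else 0) := by
    funext i
    by_cases hh : 0 < evL A i
    · have hl : evL A i ≠ 0 := ne_of_gt hh
      rw [if_pos hh, if_pos hh]
      field_simp
    · simp [hh]
  have halt : dualW A
      = A * ((evQ A * diagonal (fun i =>
          if 0 < evL A i then (evL A i * Real.sqrt (evL A i))⁻¹ else 0) * (evQ A)ᵀ)
        * (Aᵀ * A)) := by
    rw [spec_thm A, sandwich_mul _ (evQ_orth A), hfun, dualW]
  rw [halt]
  calc A * ((evQ A * diagonal (fun i =>
          if 0 < evL A i then (evL A i * Real.sqrt (evL A i))⁻¹ else 0) * (evQ A)ᵀ)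
        * (Aᵀ * A)) * V
      = A * ((evQ A * diagonal (fun i =>
          if 0 < evL A i then (evL A i * Real.sqrt (evL A i))⁻¹ else 0) * (evQ A)ᵀ)
        * (Aᵀ * (A * V))) := by simp only [Matrix.mul_assoc]
    _ = 0 := by rw [h, Matrix.mul_zero, Matrix.mul_zero, Matrix.mul_zero]

theorem mul_dualW_left (A : Matrix (Fin n) (Fin n) ℝ) (U : Matrix (Fin n) (Fin r) ℝ)
    (h : Uᵀ * A = 0) : Uᵀ * dualW A = 0 := by
  rw [dualW, ← Matrix.mul_assoc, h, Matrix.zero_mul]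

/-! ### duality: frobInner ≤ spectral * nuclear -/

lemma col_mulVec (G M : Matrix (Fin n) (Fin n) ℝ) (i : Fin n) :
    (fun k => (G * M) k i) = G *ᵥ (fun k => M k i) := by
  funext k
  simp [Matrix.mul_apply, Matrix.mulVec, dotProduct]

lemma sum_col_sq (M : Matrix (Fin n) (Fin n) ℝ) (i : Fin n) :
    ∑ k, (M k i) ^ 2 = (Mᵀ * M) i i := by
  simp [Matrix.mul_apply, pow_two]

lemma enorm_col_evQ (A : Matrix (Fin n) (Fin n) ℝ) (i : Fin n) :
    enorm (fun k => evQ A k i) = 1 := by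
  rw [enorm]
  have h : ∑ k, (evQ A k i) ^ 2 = 1 := by
    rw [sum_col_sq, evQ_orth]
    simp [Matrix.one_apply]
  rw [h, Real.sqrt_one]

theorem frobInner_le_dual (G B : Matrix (Fin n) (Fin n) ℝ) :
    frobInner G B ≤ matSpectralNorm G * nuclearNorm B := by
  have hQ := evQ_orth B
  have hQ' := evQ_orth' B
  have e1 : frobInner G B = Matrix.trace ((G * evQ B)ᵀ * (B * evQ B)) := by
    rw [eq_comm, Matrix.transpose_mul, Matrix.trace_mul_comm]
    simp only [Matrix.mul_assoc]
    rw [← Matrix.mul_assoc (evQ B) ((evQ B)ᵀ) Gᵀ, hQ', Matrix.one_mul, frobInner,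
      Matrix.trace_mul_comm]
  have e2 : (B * evQ B)ᵀ * (B * evQ B) = diagonal (evL B) := by
    rw [Matrix.transpose_mul, Matrix.mul_assoc, ← Matrix.mul_assoc Bᵀ B, spec_thm B,
      Matrix.mul_assoc (evQ B * diagonal (evL B)) _ _, hQ, Matrix.mul_one,
      ← Matrix.mul_assoc, hQ, Matrix.one_mul]
  have e3 : frobInner G B = ∑ i, (fun k => (G * evQ B) k i) ⬝ᵥ (fun k => (B * evQ B) k i) := by
    rw [e1]
    simp [Matrix.trace, Matrix.diag, Matrix.mul_apply, dotProduct, mul_comm]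
  rw [e3, nuclearNorm_eq, Finset.mul_sum]
  apply Finset.sum_le_sum
  intro i _
  have b1 : (fun k => (G * evQ B) k i) ⬝ᵥ (fun k => (B * evQ B) k i)
      ≤ enorm (fun k => (G * evQ B) k i) * enorm (fun k => (B * evQ B) k i) :=
    dot_le_enorm _ _
  have b2 : enorm (fun k => (G * evQ B) k i) ≤ matSpectralNorm G := by
    rw [col_mulVec]
    have := mulVec_enorm_le G (fun k => evQ B k i)
    rwa [enorm_col_evQ, mul_one] at this
  have b3 : enorm (fun k => (B * evQ B) k i) = Real.sqrt (evL B i) := by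
    rw [enorm]
    congr 1
    rw [sum_col_sq, e2]
    simp
  calc (fun k => (G * evQ B) k i) ⬝ᵥ (fun k => (B * evQ B) k i)
      ≤ enorm (fun k => (G * evQ B) k i) * enorm (fun k => (B * evQ B) k i) := b1
    _ ≤ matSpectralNorm G * Real.sqrt (evL B i) := by
        rw [b3]
        exact mul_le_mul_of_nonneg_right b2 (Real.sqrt_nonneg _)


/-! ### norm comparisons -/

lemma sqrt_sum_le_sum_sqrt (f : Fin n → ℝ) (hf : ∀ i, 0 ≤ f i) :
    Real.sqrt (∑ i, f i) ≤ ∑ i, Real.sqrt (f i) := by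
  have h : ∑ i, f i ≤ (∑ i, Real.sqrt (f i)) ^ 2 := by
    have h2 := Finset.sum_sq_le_sq_sum_of_nonneg (f := fun i => Real.sqrt (f i))
      (s := (Finset.univ : Finset (Fin n))) (fun i _ => Real.sqrt_nonneg _)
    calc ∑ i, f i = ∑ i, Real.sqrt (f i) ^ 2 := by
          apply Finset.sum_congr rfl; intro i _; rw [Real.sq_sqrt (hf i)]
      _ ≤ _ := h2
  calc Real.sqrt (∑ i, f i) ≤ Real.sqrt ((∑ i, Real.sqrt (f i)) ^ 2) := Real.sqrt_le_sqrt h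
    _ = _ := Real.sqrt_sq (Finset.sum_nonneg fun i _ => Real.sqrt_nonneg _)

lemma frobNorm_le_l1Norm (A : Matrix (Fin n) (Fin n) ℝ) : frobNorm A ≤ l1Norm A := by
  rw [frobNorm, l1Norm]
  have h : ∑ i, ∑ j, (A i j)^2 ≤ (∑ i, ∑ j, |A i j|)^2 := by
    have e1 : ∑ i, ∑ j, (A i j)^2 = ∑ p : Fin n × Fin n, |A p.1 p.2|^2 := by
      rw [Fintype.sum_prod_type]; simp [sq_abs]
    have e2 : ∑ i, ∑ j, |A i j| = ∑ p : Fin n × Fin n, |A p.1 p.2| := by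
      rw [Fintype.sum_prod_type]
    rw [e1, e2]
    exact Finset.sum_sq_le_sq_sum_of_nonneg (fun p _ => abs_nonneg _)
  calc Real.sqrt (∑ i, ∑ j, (A i j)^2) ≤ Real.sqrt ((∑ i, ∑ j, |A i j|)^2) := Real.sqrt_le_sqrt h
    _ = ∑ i, ∑ j, |A i j| := Real.sqrt_sq (by positivity)

lemma trace_transpose_mul_self (A : Matrix (Fin n) (Fin n) ℝ) :
    Matrix.trace (Aᵀ * A) = ∑ i, ∑ j, (A i j) ^ 2 := by
  simp only [Matrix.trace, Matrix.diag, Matrix.mul_apply, Matrix.transpose_apply, pow_two]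
  exact Finset.sum_comm

lemma frobNorm_le_nuclearNorm (A : Matrix (Fin n) (Fin n) ℝ) : frobNorm A ≤ nuclearNorm A := by
  rw [frobNorm, nuclearNorm_eq]
  have h : ∑ i, ∑ j, (A i j)^2 = ∑ i, evL A i := by
    rw [← trace_transpose_mul_self, spec_thm A, sandwich_trace _ (evQ_orth A)]
  rw [h]
  exact sqrt_sum_le_sum_sqrt _ (evL_nonneg A)

lemma l1Norm_nonneg (A : Matrix (Fin n) (Fin n) ℝ) : 0 ≤ l1Norm A :=
  Finset.sum_nonneg fun _ _ => Finset.sum_nonneg fun _ _ => abs_nonneg _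

/-! ### projSupp lemmas -/

section Supp
variable (Ω : Set (Fin n × Fin n)) [DecidablePred (· ∈ Ω)]

lemma projSupp_add (A B : Matrix (Fin n) (Fin n) ℝ) :
    projSupp Ω (A + B) = projSupp Ω A + projSupp Ω B := by
  ext i j
  by_cases h : (i, j) ∈ Ω <;> simp [projSupp, h]

lemma projSupp_idem (M : Matrix (Fin n) (Fin n) ℝ) :
    projSupp Ω (projSupp Ω M) = projSupp Ω M := by
  ext i j
  by_cases h : (i, j) ∈ Ω <;> simp [projSupp, h]

lemma frobInner_projSupp (A B : Matrix (Fin n) (Fin n) ℝ) :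
    frobInner (projSupp Ω A) B = frobInner A (projSupp Ω B) := by
  rw [frobInner_eq_sum, frobInner_eq_sum]
  apply Finset.sum_congr rfl; intro i _
  apply Finset.sum_congr rfl; intro j _
  by_cases h : (i, j) ∈ Ω <;> simp [projSupp, h]

lemma frobNorm_projSupp_le (M : Matrix (Fin n) (Fin n) ℝ) :
    frobNorm (projSupp Ω M) ≤ frobNorm M := by
  apply Real.sqrt_le_sqrt
  apply Finset.sum_le_sum; intro i _
  apply Finset.sum_le_sum; intro j _
  by_cases h : (i, j) ∈ Ω <;> simp [projSupp, h, sq_nonneg]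

end Supp

/-! ### projT lemmas -/

lemma projT_add (U V : Matrix (Fin n) (Fin r) ℝ) (A B : Matrix (Fin n) (Fin n) ℝ) :
    projT U V (A + B) = projT U V A + projT U V B := by
  simp only [projT, Matrix.mul_add, Matrix.add_mul]
  try abel

lemma frobInner_sub_right (A B C : Matrix (Fin n) (Fin n) ℝ) :
    frobInner A (B - C) = frobInner A B - frobInner A C := by
  simp [frobInner, Matrix.mul_sub]

lemma frobInner_UUt (U : Matrix (Fin n) (Fin r) ℝ) (A B : Matrix (Fin n) (Fin n) ℝ) :
    frobInner (U * Uᵀ * A) B = frobInner A (U * Uᵀ * B) := by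
  rw [frobInner, frobInner]
  simp only [Matrix.transpose_mul, Matrix.transpose_transpose]
  simp only [Matrix.mul_assoc]

lemma frobInner_VVt (V : Matrix (Fin n) (Fin r) ℝ) (A B : Matrix (Fin n) (Fin n) ℝ) :
    frobInner (A * (V * Vᵀ)) B = frobInner A (B * (V * Vᵀ)) := by
  rw [frobInner, frobInner]
  simp only [Matrix.transpose_mul, Matrix.transpose_transpose]
  rw [Matrix.mul_assoc, Matrix.trace_mul_comm, Matrix.mul_assoc, Matrix.trace_mul_comm Aᵀ]
  try simp only [Matrix.mul_assoc]

lemma frobInner_projT (U V : Matrix (Fin n) (Fin r) ℝ) (A B : Matrix (Fin n) (Fin n) ℝ) :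
    frobInner (projT U V A) B = frobInner A (projT U V B) := by
  have h1 : ∀ X Y : Matrix (Fin n) (Fin n) ℝ,
      frobInner (U * Uᵀ * X * (V * Vᵀ)) Y = frobInner X (U * Uᵀ * Y * (V * Vᵀ)) := by
    intro X Y
    rw [show U * Uᵀ * X * (V * Vᵀ) = U * Uᵀ * (X * (V * Vᵀ)) by simp only [Matrix.mul_assoc],
      show U * Uᵀ * Y * (V * Vᵀ) = U * Uᵀ * (Y * (V * Vᵀ)) by simp only [Matrix.mul_assoc],
      frobInner_UUt, frobInner_VVt]
    simp only [Matrix.mul_assoc]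
  rw [projT, projT, frobInner_sub_left, frobInner_add_left, frobInner_sub_right,
    frobInner_add_right, frobInner_UUt, frobInner_VVt, h1]

/-! ### sign lemmas and l1 subgradient -/

lemma sign_mul_self (x : ℝ) : Real.sign x * x = |x| := by
  rcases lt_trichotomy x 0 with h | h | h
  · rw [Real.sign_of_neg h, abs_of_neg h]; ring
  · simp [h]
  · rw [Real.sign_of_pos h, abs_of_pos h]; ring

lemma abs_sign_le_one (x : ℝ) : |Real.sign x| ≤ 1 := by
  rcases lt_trichotomy x 0 with h | h | h
  · rw [Real.sign_of_neg h]; simp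
  · simp [h]
  · rw [Real.sign_of_pos h]; simp

lemma l1_lower (S₀ H : Matrix (Fin n) (Fin n) ℝ) (Ω : Set (Fin n × Fin n))
    [DecidablePred (· ∈ Ω)] (hΩ : Ω = {p : Fin n × Fin n | S₀ p.1 p.2 ≠ 0}) :
    l1Norm S₀ - frobInner (signMatrix S₀) H + l1Norm (H - projSupp Ω H)
      ≤ l1Norm (S₀ - H) := by
  have key : ∀ i j, |S₀ i j| - Real.sign (S₀ i j) * H i j + |(H - projSupp Ω H) i j|
      ≤ |(S₀ - H) i j| := by
    intro i j
    by_cases h : (i, j) ∈ Ω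
    · have hC : (H - projSupp Ω H) i j = 0 := by simp [projSupp, h, Matrix.sub_apply]
      rw [hC, abs_zero, add_zero, Matrix.sub_apply]
      calc |S₀ i j| - Real.sign (S₀ i j) * H i j
          = Real.sign (S₀ i j) * (S₀ i j - H i j) := by
            rw [mul_sub, sign_mul_self]
        _ ≤ |Real.sign (S₀ i j) * (S₀ i j - H i j)| := le_abs_self _
        _ = |Real.sign (S₀ i j)| * |S₀ i j - H i j| := abs_mul _ _
        _ ≤ 1 * |S₀ i j - H i j| :=
            mul_le_mul_of_nonneg_right (abs_sign_le_one _) (abs_nonneg _)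
        _ = |S₀ i j - H i j| := one_mul _
    · have hS : S₀ i j = 0 := by
        rw [hΩ] at h
        simpa using h
      simp [projSupp, h, hS, Matrix.sub_apply, Real.sign_zero]
  calc l1Norm S₀ - frobInner (signMatrix S₀) H + l1Norm (H - projSupp Ω H)
      = ∑ i, ∑ j, (|S₀ i j| - Real.sign (S₀ i j) * H i j + |(H - projSupp Ω H) i j|) := by
        rw [l1Norm, l1Norm, frobInner_eq_sum]
        simp only [← Finset.sum_sub_distrib, ← Finset.sum_add_distrib]
        apply Finset.sum_congr rfl; intro i _
        apply Finset.sum_congr rfl; intro j _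
        rfl
    _ ≤ ∑ i, ∑ j, |(S₀ - H) i j| := by
        apply Finset.sum_le_sum; intro i _
        apply Finset.sum_le_sum; intro j _
        exact key i j
    _ = l1Norm (S₀ - H) := rfl

/-! ### pairing with U Sig Vᵀ -/

lemma sum_col_sq' (M : Matrix (Fin n) (Fin r) ℝ) (i : Fin r) :
    ∑ k, (M k i) ^ 2 = (Mᵀ * M) i i := by
  simp [Matrix.mul_apply, pow_two]

lemma enorm_col_orth (V : Matrix (Fin n) (Fin r) ℝ) (hV : Vᵀ * V = 1) (i : Fin r) :
    enorm (fun k => V k i) = 1 := by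
  rw [enorm]
  have h : ∑ k, (V k i) ^ 2 = 1 := by
    rw [sum_col_sq', hV]; simp [Matrix.one_apply]
  rw [h, Real.sqrt_one]

lemma frobInner_UsigV_le (G : Matrix (Fin n) (Fin n) ℝ) (U V : Matrix (Fin n) (Fin r) ℝ)
    (Sig : Matrix (Fin r) (Fin r) ℝ) (hU : Uᵀ * U = 1) (hV : Vᵀ * V = 1)
    (hdiag : ∀ i j, i ≠ j → Sig i j = 0) (hpos : ∀ i, 0 ≤ Sig i i) :
    frobInner G (U * Sig * Vᵀ) ≤ matSpectralNorm G * ∑ i, Sig i i := by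
  have e1 : frobInner G (U * Sig * Vᵀ) = Matrix.trace ((Vᵀ * (Gᵀ * U)) * Sig) := by
    rw [frobInner]
    rw [show Gᵀ * (U * Sig * Vᵀ) = (Gᵀ * U * Sig) * Vᵀ by simp only [Matrix.mul_assoc]]
    rw [Matrix.trace_mul_comm]
    simp only [Matrix.mul_assoc]
  have e2 : Matrix.trace ((Vᵀ * (Gᵀ * U)) * Sig)
      = ∑ i, (Vᵀ * (Gᵀ * U)) i i * Sig i i := by
    rw [Matrix.trace]
    apply Finset.sum_congr rfl; intro i _
    rw [Matrix.diag, Matrix.mul_apply]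
    apply Finset.sum_eq_single i
    · intro j _ hj
      rw [hdiag j i hj, mul_zero]
    · intro habs; exact absurd (Finset.mem_univ i) habs
  have e3 : ∀ i, (Vᵀ * (Gᵀ * U)) i i
      = (G *ᵥ (fun k => V k i)) ⬝ᵥ (fun k => U k i) := by
    intro i
    simp only [Matrix.mul_apply, Matrix.transpose_apply, Matrix.mulVec, dotProduct]
    calc ∑ k, V k i * ∑ l, G l k * U l i
        = ∑ k, ∑ l, V k i * (G l k * U l i) := by
          apply Finset.sum_congr rfl; intro k _; rw [Finset.mul_sum]
      _ = ∑ l, ∑ k, V k i * (G l k * U l i) := Finset.sum_comm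
      _ = ∑ l, (∑ k, G l k * V k i) * U l i := by
          apply Finset.sum_congr rfl; intro l _
          rw [Finset.sum_mul]
          apply Finset.sum_congr rfl; intro k _
          ring
  rw [e1, e2, Finset.mul_sum]
  apply Finset.sum_le_sum
  intro i _
  rw [e3 i]
  have b1 : (G *ᵥ (fun k => V k i)) ⬝ᵥ (fun k => U k i)
      ≤ enorm (G *ᵥ (fun k => V k i)) * enorm (fun k => U k i) := dot_le_enorm _ _
  have b2 : enorm (G *ᵥ (fun k => V k i)) ≤ matSpectralNorm G := by
    have := mulVec_enorm_le G (fun k => V k i)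
    rwa [enorm_col_orth V hV, mul_one] at this
  have b3 : enorm (fun k => U k i) = 1 := enorm_col_orth U hU i
  calc (G *ᵥ (fun k => V k i)) ⬝ᵥ (fun k => U k i) * Sig i i
      ≤ matSpectralNorm G * Sig i i := by
        apply mul_le_mul_of_nonneg_right _ (hpos i)
        calc (G *ᵥ (fun k => V k i)) ⬝ᵥ (fun k => U k i)
            ≤ enorm (G *ᵥ (fun k => V k i)) * enorm (fun k => U k i) := b1
          _ = enorm (G *ᵥ (fun k => V k i)) := by rw [b3, mul_one]
          _ ≤ matSpectralNorm G := b2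

end PCPaux

set_option maxHeartbeats 1000000 in
open PCPaux in
/-- quantitative lower bound on the PCP objective under the dual certificate. -/
theorem pcp_objective_lower_bound {n r : ℕ}
    (L₀ S₀ : Matrix (Fin n) (Fin n) ℝ)
    (U V : Matrix (Fin n) (Fin r) ℝ) (Sig : Matrix (Fin r) (Fin r) ℝ)
    (hU : Uᵀ * U = 1) (hV : Vᵀ * V = 1)
    (hSigdiag : ∀ i j, i ≠ j → Sig i j = 0) (hSigpos : ∀ i, 0 < Sig i i)
    (hSVD : L₀ = U * Sig * Vᵀ)
    (Ω : Set (Fin n × Fin n)) [DecidablePred (· ∈ Ω)]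
    (hΩ : Ω = {p : Fin n × Fin n | S₀ p.1 p.2 ≠ 0})
    (lam α ε : ℝ)
    (hα : α ∈ Set.Ioo (0:ℝ) 1) (hε : ε ∈ Set.Ioo (0:ℝ) 1)
    (hlam : 0 < lam) (hlamα : lam < 1 - α)
    (hεq : (1:ℝ)/2 - (1 - ε) * ε > 0) (hαε : (1 - α) - lam * ε > 0)
    -- ‖P_Ω P_T‖ ≤ 1 - ε (as operators in the Frobenius norm)
    (hPP : ∀ M : Matrix (Fin n) (Fin n) ℝ,
      frobNorm (projSupp Ω (projT U V M)) ≤ (1 - ε) * frobNorm M)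
    -- the dual certificate (W, F) and the residual Δ
    (W F Δ : Matrix (Fin n) (Fin n) ℝ)
    (hWT : projT U V W = 0) (hWnorm : matSpectralNorm W ≤ α)
    (hFΩ : projSupp Ω F = 0) (hFnorm : ∀ i j, |F i j| ≤ 1/2)
    (hΔΩ : projSupp Ω Δ = Δ) (hΔF : frobNorm Δ ≤ ε ^ 2)
    (hcert : U * Vᵀ + W = lam • (signMatrix S₀ + F + Δ)) :
    ∀ H : Matrix (Fin n) (Fin n) ℝ,
      nuclearNorm (L₀ + H) + lam * l1Norm (S₀ - H) ≥
        nuclearNorm L₀ + lam * l1Norm S₀ +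
          ((1 - α) - lam * ε) * nuclearNorm (H - projT U V H) +
          lam * ((1:ℝ)/2 - (1 - ε) * ε) * l1Norm (H - projSupp Ω H) := by
  intro H
  set B := H - projT U V H with hBdef
  set C := H - projSupp Ω H with hCdef
  have hsplitT : H = projT U V H + B := by rw [hBdef]; abel
  have hsplitS : H = projSupp Ω H + C := by rw [hCdef]; abel
  have hUB : Uᵀ * B = 0 := by
    rw [hBdef, projT]
    simp only [Matrix.mul_sub, Matrix.mul_add]
    simp only [← Matrix.mul_assoc]
    rw [hU]
    simp only [Matrix.one_mul]
    abel
  have hBV : B * V = 0 := by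
    rw [hBdef, projT]
    simp only [Matrix.sub_mul, Matrix.add_mul]
    simp only [Matrix.mul_assoc]
    rw [hV]
    simp only [Matrix.mul_one]
    abel
  set W₀ := PCPaux.dualW B with hW₀
  have hUW₀ : Uᵀ * W₀ = 0 := PCPaux.mul_dualW_left B U hUB
  have hW₀V : W₀ * V = 0 := PCPaux.dualW_mul_eq_zero B V hBV
  have hW₀U : W₀ᵀ * U = 0 := by
    have h := congrArg Matrix.transpose hUW₀
    rwa [Matrix.transpose_mul, Matrix.transpose_transpose, Matrix.transpose_zero] at h
  have hW₀T : projT U V W₀ = 0 := by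
    rw [projT]
    have h1 : U * Uᵀ * W₀ = 0 := by rw [Matrix.mul_assoc, hUW₀, Matrix.mul_zero]
    have h2 : W₀ * (V * Vᵀ) = 0 := by rw [← Matrix.mul_assoc, hW₀V, Matrix.zero_mul]
    rw [h1, h2, Matrix.zero_mul]
    simp
  set G := U * Vᵀ + W₀ with hG
  have hGtG : Gᵀ * G = V * Vᵀ + W₀ᵀ * W₀ := by
    rw [hG, Matrix.transpose_add, Matrix.transpose_mul, Matrix.transpose_transpose,
      Matrix.add_mul, Matrix.mul_add, Matrix.mul_add]
    have e1 : V * Uᵀ * (U * Vᵀ) = V * Vᵀ := by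
      rw [Matrix.mul_assoc, ← Matrix.mul_assoc Uᵀ U Vᵀ, hU, Matrix.one_mul]
    have e2 : V * Uᵀ * W₀ = 0 := by rw [Matrix.mul_assoc, hUW₀, Matrix.mul_zero]
    have e3 : W₀ᵀ * (U * Vᵀ) = 0 := by rw [← Matrix.mul_assoc, hW₀U, Matrix.zero_mul]
    rw [e1, e2, e3]
    abel
  have hVW₀t : Vᵀ * W₀ᵀ = 0 := by
    have h := congrArg Matrix.transpose hW₀V
    rwa [Matrix.transpose_mul, Matrix.transpose_zero] at h
  have hVVW : (V * Vᵀ) * (W₀ᵀ * W₀) = 0 := by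
    rw [Matrix.mul_assoc, ← Matrix.mul_assoc Vᵀ W₀ᵀ W₀, hVW₀t, Matrix.zero_mul, Matrix.mul_zero]
  have hWVV : (W₀ᵀ * W₀) * (V * Vᵀ) = 0 := by
    rw [Matrix.mul_assoc, ← Matrix.mul_assoc W₀ V Vᵀ, hW₀V, Matrix.zero_mul, Matrix.mul_zero]
  have hPP' : (W₀ᵀ * W₀) * (W₀ᵀ * W₀) = W₀ᵀ * W₀ := by
    rw [hW₀, PCPaux.dualW_transpose_mul, PCPaux.sandwich_mul _ (PCPaux.evQ_orth B)]
    have hfun : (fun i => (if 0 < PCPaux.evL B i then (1:ℝ) else 0)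
          * (if 0 < PCPaux.evL B i then (1:ℝ) else 0))
        = fun i => if 0 < PCPaux.evL B i then (1:ℝ) else 0 := by
      funext i; by_cases h : 0 < PCPaux.evL B i <;> simp [h]
    rw [hfun]
  have hVV4 : (V * Vᵀ) * (V * Vᵀ) = V * Vᵀ := by
    rw [Matrix.mul_assoc, ← Matrix.mul_assoc Vᵀ V Vᵀ, hV, Matrix.one_mul]
  have hGid : (Gᵀ * G) * (Gᵀ * G) = Gᵀ * G := by
    rw [hGtG, Matrix.add_mul, Matrix.mul_add, Matrix.mul_add, hVV4, hVVW, hWVV, hPP']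
    abel
  have hGspec : matSpectralNorm G ≤ 1 := PCPaux.spectralNorm_le_one_of_proj G hGid
  have hpair : frobInner G (L₀ + H) ≤ nuclearNorm (L₀ + H) := by
    have h := PCPaux.frobInner_le_dual G (L₀ + H)
    have h2 : matSpectralNorm G * nuclearNorm (L₀ + H) ≤ 1 * nuclearNorm (L₀ + H) :=
      mul_le_mul_of_nonneg_right hGspec (PCPaux.nuclearNorm_nonneg _)
    rw [one_mul] at h2
    linarith
  have hSig0 : (0:ℝ) ≤ ∑ i, Sig i i := Finset.sum_nonneg fun i _ => (hSigpos i).le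
  have hGL : frobInner (U * Vᵀ) L₀ = ∑ i, Sig i i := by
    rw [frobInner, hSVD, Matrix.transpose_mul, Matrix.transpose_transpose]
    rw [show (V * Uᵀ) * (U * Sig * Vᵀ) = V * ((Uᵀ * U) * (Sig * Vᵀ)) by
      simp only [Matrix.mul_assoc], hU, Matrix.one_mul, Matrix.trace_mul_comm,
      Matrix.mul_assoc, hV, Matrix.mul_one]
    simp [Matrix.trace, Matrix.diag]
  have hW₀L : frobInner W₀ L₀ = 0 := by
    rw [frobInner, hSVD]
    rw [show W₀ᵀ * (U * Sig * Vᵀ) = (W₀ᵀ * U) * (Sig * Vᵀ) by simp only [Matrix.mul_assoc],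
      hW₀U, Matrix.zero_mul, Matrix.trace_zero]
  have hnucL : nuclearNorm L₀ ≤ ∑ i, Sig i i := by
    have h1 := PCPaux.dualW_frobInner L₀
    have h2 : frobInner (PCPaux.dualW L₀) L₀
        ≤ matSpectralNorm (PCPaux.dualW L₀) * ∑ i, Sig i i := by
      have h := PCPaux.frobInner_UsigV_le (PCPaux.dualW L₀) U V Sig hU hV hSigdiag
        (fun i => (hSigpos i).le)
      rwa [← hSVD] at h
    have h3 : matSpectralNorm (PCPaux.dualW L₀) * ∑ i, Sig i i ≤ 1 * ∑ i, Sig i i :=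
      mul_le_mul_of_nonneg_right (PCPaux.dualW_spec_le_one L₀) hSig0
    rw [one_mul] at h3
    linarith
  have hW₀H : frobInner W₀ H = nuclearNorm B := by
    have hsplit : frobInner W₀ H = frobInner W₀ (projT U V H) + frobInner W₀ B := by
      rw [← PCPaux.frobInner_add_right, ← hsplitT]
    have h1 : frobInner W₀ (projT U V H) = 0 := by
      rw [← PCPaux.frobInner_projT, hW₀T, PCPaux.frobInner_zero_left]
    rw [hsplit, h1, zero_add, hW₀]
    exact PCPaux.dualW_frobInner B
  have hnuc_main : nuclearNorm L₀ + frobInner (U * Vᵀ) H + nuclearNorm B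
      ≤ nuclearNorm (L₀ + H) := by
    have hdecomp : frobInner G (L₀ + H)
        = frobInner (U * Vᵀ) L₀ + frobInner W₀ L₀
          + (frobInner (U * Vᵀ) H + frobInner W₀ H) := by
      rw [hG, PCPaux.frobInner_add_right, PCPaux.frobInner_add_left, PCPaux.frobInner_add_left]
      try ring
    rw [hdecomp, hGL, hW₀L, hW₀H] at hpair
    linarith
  have hUVt : frobInner (U * Vᵀ) H = lam * frobInner (signMatrix S₀) H
      + lam * frobInner F H + lam * frobInner Δ H - frobInner W H := by
    have h1 : U * Vᵀ = lam • (signMatrix S₀ + F + Δ) - W := by rw [← hcert]; abel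
    rw [h1, PCPaux.frobInner_sub_left, PCPaux.frobInner_smul_left, PCPaux.frobInner_add_left,
      PCPaux.frobInner_add_left]
    ring
  have hWH : frobInner W H ≤ α * nuclearNorm B := by
    have hsplit : frobInner W H = frobInner W (projT U V H) + frobInner W B := by
      rw [← PCPaux.frobInner_add_right, ← hsplitT]
    have h1 : frobInner W (projT U V H) = 0 := by
      rw [← PCPaux.frobInner_projT, hWT, PCPaux.frobInner_zero_left]
    have h2 : frobInner W B ≤ matSpectralNorm W * nuclearNorm B := PCPaux.frobInner_le_dual W B
    have h3 : matSpectralNorm W * nuclearNorm B ≤ α * nuclearNorm B :=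
      mul_le_mul_of_nonneg_right hWnorm (PCPaux.nuclearNorm_nonneg B)
    rw [hsplit, h1, zero_add]
    linarith
  have hFH : -(1/2 * l1Norm C) ≤ frobInner F H := by
    have hsplit : frobInner F H = frobInner F (projSupp Ω H) + frobInner F C := by
      rw [← PCPaux.frobInner_add_right, ← hsplitS]
    have h1 : frobInner F (projSupp Ω H) = 0 := by
      rw [← PCPaux.frobInner_projSupp, hFΩ, PCPaux.frobInner_zero_left]
    have h2 : -(1/2 * l1Norm C) ≤ frobInner F C := by
      rw [PCPaux.frobInner_eq_sum, l1Norm, Finset.mul_sum, ← Finset.sum_neg_distrib]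
      apply Finset.sum_le_sum
      intro i _
      rw [Finset.mul_sum, ← Finset.sum_neg_distrib]
      apply Finset.sum_le_sum
      intro j _
      have ha : |F i j * C i j| ≤ 1/2 * |C i j| := by
        rw [abs_mul]
        exact mul_le_mul_of_nonneg_right (hFnorm i j) (abs_nonneg _)
      have hb := neg_abs_le (F i j * C i j)
      linarith
    rw [hsplit, h1, zero_add]
    exact h2
  have hΔH : -(ε^2 * frobNorm (projSupp Ω H)) ≤ frobInner Δ H := by
    have hsplit : frobInner Δ H = frobInner Δ (projSupp Ω H) + frobInner Δ C := by
      rw [← PCPaux.frobInner_add_right, ← hsplitS]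
    have h1 : frobInner Δ C = 0 := by
      rw [← hΔΩ, PCPaux.frobInner_projSupp]
      have h2 : projSupp Ω C = 0 := by
        rw [hCdef]
        ext i j
        by_cases h : (i, j) ∈ Ω <;> simp [projSupp, Matrix.sub_apply, h]
      rw [h2]
      simp [frobInner]
    have h2 : -(frobNorm Δ * frobNorm (projSupp Ω H)) ≤ frobInner Δ (projSupp Ω H) :=
      PCPaux.neg_frobInner_le Δ _
    have h3 : frobNorm Δ * frobNorm (projSupp Ω H) ≤ ε^2 * frobNorm (projSupp Ω H) :=
      mul_le_mul_of_nonneg_right hΔF (PCPaux.frobNorm_nonneg _)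
    rw [hsplit, h1, add_zero]
    linarith
  have hl1 : l1Norm S₀ - frobInner (signMatrix S₀) H + l1Norm C ≤ l1Norm (S₀ - H) :=
    PCPaux.l1_lower S₀ H Ω hΩ
  have hchain : ε * frobNorm (projSupp Ω H) ≤ (1 - ε) * frobNorm C + frobNorm B := by
    have hsplit1 : projSupp Ω H = projSupp Ω (projT U V H) + projSupp Ω B := by
      rw [← PCPaux.projSupp_add, ← hsplitT]
    have t1 : frobNorm (projSupp Ω H)
        ≤ frobNorm (projSupp Ω (projT U V H)) + frobNorm (projSupp Ω B) := by
      conv_lhs => rw [hsplit1]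
      exact PCPaux.frobNorm_add_le _ _
    have t2 : frobNorm (projSupp Ω B) ≤ frobNorm B := PCPaux.frobNorm_projSupp_le Ω B
    have hsplit2 : projT U V H = projT U V (projSupp Ω H) + projT U V C := by
      rw [← PCPaux.projT_add, ← hsplitS]
    have t3 : frobNorm (projSupp Ω (projT U V H))
        ≤ frobNorm (projSupp Ω (projT U V (projSupp Ω H)))
          + frobNorm (projSupp Ω (projT U V C)) := by
      conv_lhs => rw [hsplit2, PCPaux.projSupp_add]
      exact PCPaux.frobNorm_add_le _ _
    have t4 := hPP (projSupp Ω H)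
    have t5 := hPP C
    linarith
  have hCl1 : frobNorm C ≤ l1Norm C := PCPaux.frobNorm_le_l1Norm C
  have hBfn : frobNorm B ≤ nuclearNorm B := PCPaux.frobNorm_le_nuclearNorm B
  have hPH0 : 0 ≤ frobNorm (projSupp Ω H) := PCPaux.frobNorm_nonneg _
  have hC0 : 0 ≤ l1Norm C := PCPaux.l1Norm_nonneg C
  have hB0 : 0 ≤ nuclearNorm B := PCPaux.nuclearNorm_nonneg B
  have hkey : ε^2 * frobNorm (projSupp Ω H) ≤ ε*(1-ε)*(l1Norm C) + ε*(nuclearNorm B) := by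
    have c1 : (1-ε) * frobNorm C ≤ (1-ε) * l1Norm C :=
      mul_le_mul_of_nonneg_left hCl1 (by linarith [hε.2])
    have c3 : ε * ((1-ε)*frobNorm C + frobNorm B) ≤ ε * ((1-ε)*l1Norm C + nuclearNorm B) :=
      mul_le_mul_of_nonneg_left (by linarith) hε.1.le
    calc ε^2 * frobNorm (projSupp Ω H) = ε * (ε * frobNorm (projSupp Ω H)) := by ring
      _ ≤ ε * ((1-ε)*frobNorm C + frobNorm B) := mul_le_mul_of_nonneg_left hchain hε.1.le
      _ ≤ ε * ((1-ε)*l1Norm C + nuclearNorm B) := c3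
      _ = ε*(1-ε)*(l1Norm C) + ε*(nuclearNorm B) := by ring
  have hl1' : lam * (l1Norm S₀ - frobInner (signMatrix S₀) H + l1Norm C)
      ≤ lam * l1Norm (S₀ - H) := mul_le_mul_of_nonneg_left hl1 hlam.le
  have hFH' : lam * (-(1/2 * l1Norm C)) ≤ lam * frobInner F H :=
    mul_le_mul_of_nonneg_left hFH hlam.le
  have hΔH' : lam * (-(ε^2 * frobNorm (projSupp Ω H))) ≤ lam * frobInner Δ H :=
    mul_le_mul_of_nonneg_left hΔH hlam.le
  have hkey' : lam * (ε^2 * frobNorm (projSupp Ω H))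
      ≤ lam * (ε*(1-ε)*(l1Norm C) + ε*(nuclearNorm B)) :=
    mul_le_mul_of_nonneg_left hkey hlam.le
  rw [ge_iff_le]
  ring_nf
  ring_nf at hnuc_main hUVt hWH hl1' hFH' hΔH' hkey'
  linarith [hnuc_main, hUVt, hWH, hl1', hFH', hΔH', hkey']
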